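/- Under the naïve semantics (with clauses (N⊥+), (N⊤−), (N∨+), (N∧−) replacing (⊥+), (⊤−), (∨+), (∧−)): (1) it is not the case that {⊥};∅ ⊩− χ for all χ; in fact there is an atom q with {⊥};∅ ⊮− q; (2) it is not the case that ∅;{⊤} ⊩+ χ for all χ; in fact there is an atom q with ∅;{⊤} ⊮+ q; (3) there exist a base B, formulas φ, ψ and an atom r such that ⊩+_B φ∨ψ, φ;∅ ⊩−_B r and ψ;∅ ⊩−_B r but ⊮−_B r; (4) there exist a base B, formulas φ, ψ and an atom r such that ⊩−_B φ∧ψ, ∅;φ ⊩+_B r and ∅;ψ ⊩+_B r but ⊮+_B r. -/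

import Mathlib

/-- Signs: `pos` for proof/assertion, `neg` for refutation/rejection. -/
inductive Sign where
  | pos
  | neg
deriving DecidableEq

/-- The dual of a sign. -/
def Sign.dual : Sign → Sign
  | .pos => .neg
  | .neg => .pos

/-- Formulas of the bilateral logic 2Int. -/
inductive Form where
  | atom : ℕ → Form
  | bot : Form
  | top : Form
  | and : Form → Form → Form
  | or : Form → Form → Form
  | imp : Form → Form → Form
  | coimp : Form → Form → Form
deriving DecidableEq

/-- A premise of an atomic rule: the sign required (proof or refutation), the premise atom,
and the sets of dischargeable atomic proof assumptions and refutation assumptions. -/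
structure Premise where
  sign : Sign
  concl : ℕ
  dischargePf : Set ℕ
  dischargeRf : Set ℕ

/-- An atomic rule: a list of premises, a marking as proof (`pos`) or refutation (`neg`) rule,
and an atomic conclusion. -/
structure AtomicRule where
  prems : List Premise
  sign : Sign
  concl : ℕ

/-- A bilateral atomic system (base) is a set of atomic rules. -/
abbrev Base := Set AtomicRule

/-- `AtDeriv B s Γ Δ p` formalizes `Γ;Δ ⊢^s_B p`: there is a deduction in `B` of the atom `p`
whose open atomic proof assumptions are contained in `Γ` and open atomic refutation
assumptions in `Δ`, consisting of a single assumption of sign `s` or ending with a rule of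
sign `s`. -/
inductive AtDeriv (B : Base) : Sign → Set ℕ → Set ℕ → ℕ → Prop
  | hypPos {Γ Δ : Set ℕ} {p : ℕ} : p ∈ Γ → AtDeriv B .pos Γ Δ p
  | hypNeg {Γ Δ : Set ℕ} {p : ℕ} : p ∈ Δ → AtDeriv B .neg Γ Δ p
  | app {Γ Δ : Set ℕ} {R : AtomicRule} (hR : R ∈ B)
      (h : ∀ pr ∈ R.prems,
        AtDeriv B pr.sign (Γ ∪ pr.dischargePf) (Δ ∪ pr.dischargeRf) pr.concl) :
      AtDeriv B R.sign Γ Δ R.concl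

/-- Naive bilateral validity, with clauses (N⊥+), (N⊤−), (N∨+), (N∧−). -/
def NSupp : Form → Base → Sign → Prop
  | .atom p, B, s => AtDeriv B s ∅ ∅ p
  | .bot, B, .pos => ∀ p : ℕ, AtDeriv B .pos ∅ ∅ p
  | .bot, _, .neg => True
  | .top, _, .pos => True
  | .top, B, .neg => ∀ p : ℕ, AtDeriv B .neg ∅ ∅ p
  | .and φ ψ, B, .pos => NSupp φ B .pos ∧ NSupp ψ B .pos
  | .and φ ψ, B, .neg => ∀ C : Base, B ⊆ C → ∀ p : ℕ,
      ((∀ D : Base, C ⊆ D → NSupp φ D .neg → AtDeriv D .neg ∅ ∅ p) ∧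
       (∀ D : Base, C ⊆ D → NSupp ψ D .neg → AtDeriv D .neg ∅ ∅ p)) →
      AtDeriv C .neg ∅ ∅ p
  | .or φ ψ, B, .pos => ∀ C : Base, B ⊆ C → ∀ p : ℕ,
      ((∀ D : Base, C ⊆ D → NSupp φ D .pos → AtDeriv D .pos ∅ ∅ p) ∧
       (∀ D : Base, C ⊆ D → NSupp ψ D .pos → AtDeriv D .pos ∅ ∅ p)) →
      AtDeriv C .pos ∅ ∅ p
  | .or φ ψ, B, .neg => NSupp φ B .neg ∧ NSupp ψ B .neg
  | .imp φ ψ, B, .pos => ∀ C : Base, B ⊆ C → NSupp φ C .pos → NSupp ψ C .pos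
  | .imp φ ψ, B, .neg => NSupp φ B .pos ∧ NSupp ψ B .neg
  | .coimp φ ψ, B, .pos => NSupp φ B .pos ∧ NSupp ψ B .neg
  | .coimp φ ψ, B, .neg => ∀ C : Base, B ⊆ C → NSupp ψ C .neg → NSupp φ C .neg

open Classical in
def NCons (B : Base) (Γ Δ : Set Form) (s : Sign) (χ : Form) : Prop :=
  if Γ = ∅ ∧ Δ = ∅ then NSupp χ B s
  else ∀ C : Base, B ⊆ C →
    (∀ φ ∈ Γ, NSupp φ C .pos) → (∀ ψ ∈ Δ, NSupp ψ C .neg) → NSupp χ C s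

def NValid (Γ Δ : Set Form) (s : Sign) (χ : Form) : Prop :=
  ∀ B : Base, NCons B Γ Δ s χ


/-- Zero-premise proof axiom for atom `p`. -/
def posAx (p : ℕ) : AtomicRule := ⟨[], .pos, p⟩

/-- Zero-premise refutation axiom for atom `p`. -/
def negAx (p : ℕ) : AtomicRule := ⟨[], .neg, p⟩

def B1 : Base := {R | ∃ p, R = posAx p}

def B2 : Base := {R | ∃ p, R = negAx p}

def rule3 : AtomicRule := ⟨[⟨.neg, 0, ∅, ∅⟩], .neg, 1⟩

def B3 : Base := insert rule3 B1

def rule4 : AtomicRule := ⟨[⟨.pos, 0, ∅, ∅⟩], .pos, 1⟩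

def B4 : Base := insert rule4 B2

lemma derivPosAx {B : Base} (hB : B1 ⊆ B) (p : ℕ) : AtDeriv B .pos ∅ ∅ p :=
  AtDeriv.app (R := posAx p) (hB ⟨p, rfl⟩) (by intro pr hpr; simp [posAx] at hpr)

lemma derivNegAx {B : Base} (hB : B2 ⊆ B) (p : ℕ) : AtDeriv B .neg ∅ ∅ p :=
  AtDeriv.app (R := negAx p) (hB ⟨p, rfl⟩) (by intro pr hpr; simp [negAx] at hpr)

/-- If every refutation rule of `B` has a refutation premise with empty dischargeable
refutation assumptions, then nothing is negatively derivable without open refutation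
assumptions. -/
lemma no_neg {B : Base}
    (hB : ∀ R ∈ B, R.sign = Sign.neg →
      ∃ pr ∈ R.prems, pr.sign = Sign.neg ∧ pr.dischargeRf = (∅ : Set ℕ)) :
    ∀ {s : Sign} {Γ Δ : Set ℕ} {q : ℕ},
      AtDeriv B s Γ Δ q → s = Sign.neg → Δ = ∅ → False := by
  intro s Γ Δ q h
  induction h with
  | hypPos h => intro hs _; cases hs
  | hypNeg h => intro _ hΔ; rw [hΔ] at h; exact h
  | app hR h ih =>
      intro hs hΔ
      obtain ⟨pr, hpr, hsign, hdis⟩ := hB _ hR hs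
      exact ih pr hpr hsign (by rw [hΔ, hdis, Set.empty_union])

/-- Dual of `no_neg`. -/
lemma no_pos {B : Base}
    (hB : ∀ R ∈ B, R.sign = Sign.pos →
      ∃ pr ∈ R.prems, pr.sign = Sign.pos ∧ pr.dischargePf = (∅ : Set ℕ)) :
    ∀ {s : Sign} {Γ Δ : Set ℕ} {q : ℕ},
      AtDeriv B s Γ Δ q → s = Sign.pos → Γ = ∅ → False := by
  intro s Γ Δ q h
  induction h with
  | hypPos h => intro _ hΓ; rw [hΓ] at h; exact h
  | hypNeg h => intro hs _; cases hs
  | app hR h ih =>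
      intro hs hΓ
      obtain ⟨pr, hpr, hsign, hdis⟩ := hB _ hR hs
      exact ih pr hpr hsign (by rw [hΓ, hdis, Set.empty_union])

lemma B1_no_neg : ∀ R ∈ B1, R.sign = Sign.neg →
    ∃ pr ∈ R.prems, pr.sign = Sign.neg ∧ pr.dischargeRf = (∅ : Set ℕ) := by
  rintro R ⟨p, rfl⟩ hs; cases hs

lemma B2_no_pos : ∀ R ∈ B2, R.sign = Sign.pos →
    ∃ pr ∈ R.prems, pr.sign = Sign.pos ∧ pr.dischargePf = (∅ : Set ℕ) := by
  rintro R ⟨p, rfl⟩ hs; cases hs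

lemma B3_no_neg : ∀ R ∈ B3, R.sign = Sign.neg →
    ∃ pr ∈ R.prems, pr.sign = Sign.neg ∧ pr.dischargeRf = (∅ : Set ℕ) := by
  rintro R (rfl | ⟨p, rfl⟩) hs
  · exact ⟨⟨.neg, 0, ∅, ∅⟩, by simp [rule3], rfl, rfl⟩
  · cases hs

lemma B4_no_pos : ∀ R ∈ B4, R.sign = Sign.pos →
    ∃ pr ∈ R.prems, pr.sign = Sign.pos ∧ pr.dischargePf = (∅ : Set ℕ) := by
  rintro R (rfl | ⟨p, rfl⟩) hs
  · exact ⟨⟨.pos, 0, ∅, ∅⟩, by simp [rule4], rfl, rfl⟩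
  · cases hs


theorem naive_semantics_failures :
    ((¬ ∀ χ : Form, NValid {Form.bot} ∅ .neg χ) ∧
      ∃ q : ℕ, ¬ NValid {Form.bot} ∅ .neg (.atom q)) ∧
    ((¬ ∀ χ : Form, NValid ∅ {Form.top} .pos χ) ∧
      ∃ q : ℕ, ¬ NValid ∅ {Form.top} .pos (.atom q)) ∧
    (∃ (B : Base) (φ ψ : Form) (r : ℕ),
        NSupp (φ.or ψ) B .pos ∧ NCons B {φ} ∅ .neg (.atom r) ∧
        NCons B {ψ} ∅ .neg (.atom r) ∧ ¬ NSupp (.atom r) B .neg) ∧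
    (∃ (B : Base) (φ ψ : Form) (r : ℕ),
        NSupp (φ.and ψ) B .neg ∧ NCons B ∅ {φ} .pos (.atom r) ∧
        NCons B ∅ {ψ} .pos (.atom r) ∧ ¬ NSupp (.atom r) B .pos) := by

  have hNC : ¬ ({Form.bot} = (∅ : Set Form) ∧ (∅ : Set Form) = ∅) := by simp
  have hNC2 : ¬ ((∅ : Set Form) = ∅ ∧ {Form.top} = (∅ : Set Form)) := by simp
  refine ⟨⟨?_, 0, ?_⟩, ⟨?_, 0, ?_⟩, ?_, ?_⟩
  · intro h
    have h0 := h (.atom 0) B1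
    unfold NCons at h0
    rw [if_neg hNC] at h0
    have := h0 B1 (subset_refl _)
      (by rintro φ rfl; exact fun p => derivPosAx (subset_refl _) p)
      (by rintro ψ hψ; cases hψ)
    exact no_neg B1_no_neg this rfl rfl
  · intro h
    have h0 := h B1
    unfold NCons at h0
    rw [if_neg hNC] at h0
    have := h0 B1 (subset_refl _)
      (by rintro φ rfl; exact fun p => derivPosAx (subset_refl _) p)
      (by rintro ψ hψ; cases hψ)
    exact no_neg B1_no_neg this rfl rfl
  · intro h
    have h0 := h (.atom 0) B2
    unfold NCons at h0
    rw [if_neg hNC2] at h0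
    have := h0 B2 (subset_refl _)
      (by rintro φ hφ; cases hφ)
      (by rintro ψ rfl; exact fun p => derivNegAx (subset_refl _) p)
    exact no_pos B2_no_pos this rfl rfl
  · intro h
    have h0 := h B2
    unfold NCons at h0
    rw [if_neg hNC2] at h0
    have := h0 B2 (subset_refl _)
      (by rintro φ hφ; cases hφ)
      (by rintro ψ rfl; exact fun p => derivNegAx (subset_refl _) p)
    exact no_pos B2_no_pos this rfl rfl
  · -- (3): B3, φ = ψ = ⊤ ↤ atom 0, r = 1
    refine ⟨B3, Form.coimp .top (.atom 0), Form.coimp .top (.atom 0), 1, ?_, ?_, ?_, ?_⟩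
    · intro C hC p _
      exact derivPosAx (fun R hR => hC (Or.inr hR)) p
    · unfold NCons
      rw [if_neg (by simp)]
      intro C hC hpos _
      obtain ⟨-, h0⟩ := hpos _ rfl
      have : AtDeriv C rule3.sign ∅ ∅ rule3.concl := by
        refine AtDeriv.app (hC (Or.inl rfl)) ?_
        intro pr hpr
        simp only [rule3, List.mem_singleton] at hpr
        subst hpr
        simpa [NSupp] using h0
      exact this
    · unfold NCons
      rw [if_neg (by simp)]
      intro C hC hpos _
      obtain ⟨-, h0⟩ := hpos _ rfl
      have : AtDeriv C rule3.sign ∅ ∅ rule3.concl := by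
        refine AtDeriv.app (hC (Or.inl rfl)) ?_
        intro pr hpr
        simp only [rule3, List.mem_singleton] at hpr
        subst hpr
        simpa [NSupp] using h0
      exact this
    · intro h
      exact no_neg B3_no_neg h rfl rfl
  · -- (4): B4, φ = ψ = atom 0 → ⊥, r = 1
    refine ⟨B4, Form.imp (.atom 0) .bot, Form.imp (.atom 0) .bot, 1, ?_, ?_, ?_, ?_⟩
    · intro C hC p _
      exact derivNegAx (fun R hR => hC (Or.inr hR)) p
    · unfold NCons
      rw [if_neg (by simp)]
      intro C hC _ hneg
      obtain ⟨h0, -⟩ := hneg _ rfl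
      have : AtDeriv C rule4.sign ∅ ∅ rule4.concl := by
        refine AtDeriv.app (hC (Or.inl rfl)) ?_
        intro pr hpr
        simp only [rule4, List.mem_singleton] at hpr
        subst hpr
        simpa [NSupp] using h0
      exact this
    · unfold NCons
      rw [if_neg (by simp)]
      intro C hC _ hneg
      obtain ⟨h0, -⟩ := hneg _ rfl
      have : AtDeriv C rule4.sign ∅ ∅ rule4.concl := by
        refine AtDeriv.app (hC (Or.inl rfl)) ?_
        intro pr hpr
        simp only [rule4, List.mem_singleton] at hpr
        subst hpr
        simpa [NSupp] using h0
      exact this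
    · intro h
      exact no_pos B4_no_pos h rfl rfl
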